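/- Assume Δ ≥ 0, d_i ≥ 0, d_{i+1} ≥ 0, d₁ ≥ 0, d_N ≥ 0, h > 0, x_N > x₁, and 0 ≤ α ≤ min{ d_i h/(d₁(x_N−x₁)), d_{i+1} h/(d_N(x_N−x₁)), Δh/(y_N−y₁) } (with each term ignored when its denominator is zero), where y_N > y₁. If r satisfies r[hΔ − α(y_N−y₁)] ≥ h(d_i + d_{i+1}) − α(x_N−x₁)(d₁+d_N), then all five quantities T = d_{i+1} − (α/h)(x_N−x₁)d_N, W = d_i − (α/h)(x_N−x₁)d₁, S = 2(rΔ − d_i) − (2α/h)[r(y_N−y₁) − d₁(x_N−x₁)], V = 2(rΔ − d_{i+1}) − (2α/h)[r(y_N−y₁) − d_N(x_N−x₁)], and U = (r²+3)Δ − r(d_i+d_{i+1}) − (α/h)[(r²+3)(y_N−y₁) − r(x_N−x₁)(d₁+d_N)] are nonnegative. -/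
import Mathlib


theorem stmt_14
    (Δ di di1 d₁ dN h x₁ xN y₁ yN α r : ℝ)
    (hΔ : 0 ≤ Δ) (hdi : 0 ≤ di) (hdi1 : 0 ≤ di1) (hd₁ : 0 ≤ d₁) (hdN : 0 ≤ dN)
    (hh : 0 < h) (hx : x₁ < xN) (hy : y₁ < yN) (hα0 : 0 ≤ α)
    (hα1 : α * (d₁ * (xN - x₁)) ≤ di * h)
    (hα2 : α * (dN * (xN - x₁)) ≤ di1 * h)
    (hα3 : α * (yN - y₁) ≤ Δ * h)
    (hr : r * (h * Δ - α * (yN - y₁)) ≥ h * (di + di1) - α * (xN - x₁) * (d₁ + dN)) :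
    0 ≤ di1 - (α / h) * (xN - x₁) * dN ∧
    0 ≤ di - (α / h) * (xN - x₁) * d₁ ∧
    0 ≤ 2 * (r * Δ - di) - (2 * α / h) * (r * (yN - y₁) - d₁ * (xN - x₁)) ∧
    0 ≤ 2 * (r * Δ - di1) - (2 * α / h) * (r * (yN - y₁) - dN * (xN - x₁)) ∧
    0 ≤ (r^2 + 3) * Δ - r * (di + di1)
        - (α / h) * ((r^2 + 3) * (yN - y₁) - r * (xN - x₁) * (d₁ + dN)) := by
  have hne : h ≠ 0 := hh.ne'
  have hE1 : 0 ≤ di1 * h - α * (xN - x₁) * dN := by nlinarith [hα2]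
  have hE2 : 0 ≤ di * h - α * (xN - x₁) * d₁ := by nlinarith [hα1]
  have hP : 0 ≤ h * Δ - α * (yN - y₁) := by nlinarith [hα3]
  have hE3 : 0 ≤ 2 * (r * Δ - di) * h - 2 * α * (r * (yN - y₁) - d₁ * (xN - x₁)) := by
    nlinarith [hr, hE1]
  have hE4 : 0 ≤ 2 * (r * Δ - di1) * h - 2 * α * (r * (yN - y₁) - dN * (xN - x₁)) := by
    nlinarith [hr, hE2]
  have hE5 : 0 ≤ ((r^2 + 3) * Δ - r * (di + di1)) * h
      - α * ((r^2 + 3) * (yN - y₁) - r * (xN - x₁) * (d₁ + dN)) := by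
    rcases le_or_gt 0 r with hr0 | hr0
    · nlinarith [mul_nonneg hr0 hP, hr, mul_le_mul_of_nonneg_left hr hr0]
    · nlinarith [mul_nonneg (add_nonneg hE1 hE2) (neg_nonneg.mpr hr0.le), sq_nonneg r, hP]
  refine ⟨?_, ?_, ?_, ?_, ?_⟩
  · rw [show di1 - (α / h) * (xN - x₁) * dN = (di1 * h - α * (xN - x₁) * dN) / h by
      field_simp]
    exact div_nonneg hE1 hh.le
  · rw [show di - (α / h) * (xN - x₁) * d₁ = (di * h - α * (xN - x₁) * d₁) / h by
      field_simp]
    exact div_nonneg hE2 hh.le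
  · rw [show 2 * (r * Δ - di) - (2 * α / h) * (r * (yN - y₁) - d₁ * (xN - x₁))
        = (2 * (r * Δ - di) * h - 2 * α * (r * (yN - y₁) - d₁ * (xN - x₁))) / h by
      field_simp]
    exact div_nonneg hE3 hh.le
  · rw [show 2 * (r * Δ - di1) - (2 * α / h) * (r * (yN - y₁) - dN * (xN - x₁))
        = (2 * (r * Δ - di1) * h - 2 * α * (r * (yN - y₁) - dN * (xN - x₁))) / h by
      field_simp]
    exact div_nonneg hE4 hh.le
  · rw [show (r^2 + 3) * Δ - r * (di + di1)
        - (α / h) * ((r^2 + 3) * (yN - y₁) - r * (xN - x₁) * (d₁ + dN))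
        = (((r^2 + 3) * Δ - r * (di + di1)) * h
            - α * ((r^2 + 3) * (yN - y₁) - r * (xN - x₁) * (d₁ + dN))) / h by
      field_simp]
    exact div_nonneg hE5 hh.le
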